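/- arXiv:2511.14067 — 3 statements merged into one kernel-verified Lean document; each statement's English description precedes it below -/
import Mathlib

section
/- Let G = (V, E, (C^WW, C^WR)) be a hyper-polygraph, Φ_G its Boolean encoding, and P its set of 2-width-cycle clauses. Then Φ_G and F = Φ_G ∧ ⋀_{ρ ∈ P} ρ are equisatisfiable relative to acyclicity: there exists an assignment satisfying Φ_G whose induced graph is acyclic if and only if there exists an assignment satisfying F whose induced graph is acyclic. -/
namespace DBIso

/-! ### Operations, transactions and histories -/

/-- An operation: a read `R(x,v)` or a write `W(x,v)` on key `x` with value `v`. -/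
inductive Op (Key Val : Type) where
  | read  (k : Key) (v : Val)
  | write (k : Key) (v : Val)

variable {Key Val : Type}

/-- The key accessed by an operation. -/
def Op.key : Op Key Val → Key
  | .read k _ => k
  | .write k _ => k

/-- The value read or written by an operation. -/
def Op.val : Op Key Val → Val
  | .read _ w => w
  | .write _ w => w

/-- A transaction: a finite nonempty set of (identified) operations together with
a strict total order on them (the program order), modelled as a nonempty list of
operations tagged by pairwise distinct operation identifiers; the list order is
the program order `po`. -/
structure Txn (Key Val : Type) where
  ops : List (ℕ × Op Key Val)
  ops_nonempty : ops ≠ []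
  ids_nodup : (ops.map Prod.fst).Nodup

/-- The operation of `T` at position `i` (in program order). -/
def Txn.opAt (T : Txn Key Val) (i : Fin T.ops.length) : Op Key Val :=
  (T.ops.get i).2

/-- `T ⊢ W(x,v)`: `T` writes to key `x` and `v` is the po-last value it writes to `x`. -/
def Txn.FWrites (T : Txn Key Val) (x : Key) (v : Val) : Prop :=
  ∃ i : Fin T.ops.length, T.opAt i = Op.write x v ∧
    ∀ j : Fin T.ops.length, i < j → ∀ w : Val, T.opAt j ≠ Op.write x w

/-- `T ∈ WriteTx_x` : `T` writes to key `x`. -/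
def Txn.WritesKey (T : Txn Key Val) (x : Key) : Prop :=
  ∃ v : Val, T.FWrites x v

/-- `T ⊢ R(x,v)`: `T` reads `x` before writing to it and `v` is the value returned
by the po-first such read (equivalently, the po-first operation of `T` on `x` is a
read returning `v`). -/
def Txn.FReads (T : Txn Key Val) (x : Key) (v : Val) : Prop :=
  ∃ i : Fin T.ops.length, T.opAt i = Op.read x v ∧
    ∀ j : Fin T.ops.length, j < i → (T.opAt j).key ≠ x

/-- Internal consistency of a transaction: every read of a key `x` that is po-preceded
by an operation on `x` returns the value of the po-latest preceding operation on `x`. -/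
def Txn.Internal (T : Txn Key Val) : Prop :=
  ∀ i j : Fin T.ops.length, j < i → ∀ (x : Key) (v : Val),
    T.opAt i = Op.read x v → (T.opAt j).key = x →
    (∀ k : Fin T.ops.length, j < k → k < i → (T.opAt k).key ≠ x) →
    (T.opAt j).val = v

/-- A history: a finite set of transactions with pairwise disjoint operation sets,
together with the session order `SO` (a union of strict total orders on the disjoint
subsets, given by `sess`, partitioning the transactions), and a distinguished initial
transaction `init` (`T_⊥`) writing to every key and `SO`-preceding every other
transaction. -/
structure History (Key Val : Type) where
  txns : Set (Txn Key Val)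
  txns_finite : txns.Finite
  SO : Txn Key Val → Txn Key Val → Prop
  sess : Txn Key Val → ℕ
  init : Txn Key Val
  ops_disjoint : ∀ T ∈ txns, ∀ S ∈ txns, T ≠ S →
      ∀ i ∈ T.ops.map Prod.fst, i ∉ S.ops.map Prod.fst
  so_mem : ∀ T S, SO T S → T ∈ txns ∧ S ∈ txns
  so_irrefl : ∀ T, ¬ SO T T
  so_trans : ∀ T S U, SO T S → SO S U → SO T U
  so_total_sess : ∀ T ∈ txns, ∀ S ∈ txns, T ≠ S → sess T = sess S → SO T S ∨ SO S T
  so_sess : ∀ T S, SO T S → sess T = sess S ∨ T = init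
  init_mem : init ∈ txns
  init_writes : ∀ x : Key, ∃ v : Val, init.FWrites x v
  init_so : ∀ T ∈ txns, T ≠ init → SO init T

/-- `H ⊨ Int`: every transaction of `H` is internally consistent. -/
def History.SatInt (H : History Key Val) : Prop :=
  ∀ T ∈ H.txns, T.Internal

/-- `r` is a strict total order on the set `s`. -/
def IsStrictTotalOrderOn {α : Type*} (s : Set α) (r : α → α → Prop) : Prop :=
  (∀ a b, r a b → a ∈ s ∧ b ∈ s) ∧
  (∀ a, ¬ r a a) ∧
  (∀ a b c, r a b → r b c → r a c) ∧
  (∀ a ∈ s, ∀ b ∈ s, a ≠ b → r a b ∨ r b a)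

/-- `H` satisfies SER: `H ⊨ Int` and there is a strict total order `co` on the
transactions of `H` extending `SO` such that every read `S ⊢ R(x,v)` reads the
value written by the `co`-greatest `co`-predecessor of `S` writing `x`. -/
def History.SatSER (H : History Key Val) : Prop :=
  H.SatInt ∧
  ∃ co : Txn Key Val → Txn Key Val → Prop,
    IsStrictTotalOrderOn H.txns co ∧
    (∀ T S, H.SO T S → co T S) ∧
    ∀ S ∈ H.txns, ∀ (x : Key) (v : Val), S.FReads x v →
      ∃ T', co T' S ∧ T'.WritesKey x ∧
        (∀ T, co T S → T.WritesKey x → T = T' ∨ co T T') ∧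
        T'.FWrites x v

/-! ### Dependency graphs -/

/-- `(WR, WW, RW)` extend the history `H` to a dependency graph. -/
def IsDepGraph (H : History Key Val)
    (WR WW RW : Key → Txn Key Val → Txn Key Val → Prop) : Prop :=
  (∀ (x : Key) (T S : Txn Key Val), WR x T S → T ∈ H.txns ∧ S ∈ H.txns) ∧
  (∀ x : Key, ∀ S ∈ H.txns, (∃ v, S.FReads x v) → ∃! T, WR x T S) ∧
  (∀ (x : Key) (T S : Txn Key Val), WR x T S →
      T ≠ S ∧ ∃ v, T.FWrites x v ∧ S.FReads x v) ∧
  (∀ x : Key, IsStrictTotalOrderOn {T | T ∈ H.txns ∧ T.WritesKey x} (WW x)) ∧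
  (∀ (x : Key) (T S : Txn Key Val),
      RW x T S ↔ T ≠ S ∧ ∃ T', WR x T' T ∧ WW x T' S)

/-- A binary relation is acyclic iff its transitive closure is irreflexive. -/
def RelAcyclic {α : Type*} (r : α → α → Prop) : Prop :=
  ∀ a, ¬ Relation.TransGen r a a

/-- The union `SO ∪ WR ∪ WW ∪ RW` as a binary relation on transactions. -/
def DepUnion (H : History Key Val)
    (WR WW RW : Key → Txn Key Val → Txn Key Val → Prop) :
    Txn Key Val → Txn Key Val → Prop :=
  fun T S => H.SO T S ∨ (∃ x, WR x T S) ∨ (∃ x, WW x T S) ∨ (∃ x, RW x T S)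

/-- The relation `(SO ∪ WR ∪ WW) ; RW?`. -/
def SIRel (H : History Key Val)
    (WR WW RW : Key → Txn Key Val → Txn Key Val → Prop) :
    Txn Key Val → Txn Key Val → Prop :=
  fun T S => ∃ U, (H.SO T U ∨ (∃ x, WR x T U) ∨ (∃ x, WW x T U)) ∧
    (U = S ∨ ∃ x, RW x U S)

/-- `H` satisfies SI: `H ⊨ Int` and there exist `WR, WW, RW` extending `H` to a
dependency graph with `(SO ∪ WR ∪ WW) ; RW?` acyclic. -/
def History.SatSI (H : History Key Val) : Prop :=
  H.SatInt ∧ ∃ WR WW RW, IsDepGraph H WR WW RW ∧ RelAcyclic (SIRel H WR WW RW)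

/-! ### Labeled edges and hyper-polygraphs -/

/-- Dependency edge labels. -/
inductive DepLbl (Key : Type) where
  | SO
  | WR (x : Key)
  | WW (x : Key)
  | RW (x : Key)

/-- A directed labeled edge. -/
structure LEdge (V L : Type) where
  src : V
  dst : V
  lbl : L

variable {V L : Type}

abbrev DepEdge (V Key : Type) := LEdge V (DepLbl Key)
abbrev DepEdgeSet (V Key : Type) := Set (DepEdge V Key)

/-- There is an edge of `E` from `a` to `b`. -/
def EStep (E : Set (LEdge V L)) (a b : V) : Prop := ∃ l, LEdge.mk a b l ∈ E

/-- A set of labeled edges is cyclic iff some vertex has a nonempty edge path to itself. -/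
def EdgeCyclic (E : Set (LEdge V L)) : Prop := ∃ a, Relation.TransGen (EStep E) a a

/-- `a ⤳ b`: there is a (possibly empty) edge path of `E` from `a` to `b`. -/
def EReach (E : Set (LEdge V L)) (a b : V) : Prop := Relation.ReflTransGen (EStep E) a b

/-- A hyper-polygraph over the vertex type `V`: a known edge set `E` together with
the constraint collections `C^WW` and `C^WR`. -/
structure HyperPolygraph (V Key : Type) where
  E : DepEdgeSet V Key
  CWW : Set (DepEdgeSet V Key)
  CWR : Set (DepEdgeSet V Key)

/-- A directed labeled graph (given by its edge set `E'` over the same vertex set)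
is compatible with the hyper-polygraph `G`. -/
def Compatible (G : HyperPolygraph V Key) (E' : DepEdgeSet V Key) : Prop :=
  G.E ⊆ E' ∧
  (∀ (x : Key) (T T' S : V), T ≠ S →
      LEdge.mk T' T (DepLbl.WR x) ∈ E' → LEdge.mk T' S (DepLbl.WW x) ∈ E' →
      LEdge.mk T S (DepLbl.RW x) ∈ E') ∧
  (∀ C ∈ G.CWW ∪ G.CWR, ∃! e, e ∈ E' ∧ e ∈ C)

/-- A hyper-polygraph is SER-acyclic iff some acyclic graph is compatible with it. -/
def SERAcyclic (G : HyperPolygraph V Key) : Prop :=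
  ∃ E', Compatible G E' ∧ ¬ EdgeCyclic E'

/-- The vertex set of the hyper-polygraph of a history: its transactions. -/
abbrev History.Vert (H : History Key Val) : Type := {T : Txn Key Val // T ∈ H.txns}

/-- The hyper-polygraph of a history `H`. -/
def History.hpg (H : History Key Val) : HyperPolygraph H.Vert Key where
  E := {e | (e.lbl = DepLbl.SO ∧ H.SO e.src.1 e.dst.1) ∨
        (∃ (x : Key) (v : Val), e.lbl = DepLbl.WR x ∧
          e.dst.1.FReads x v ∧ e.src.1.FWrites x v ∧ e.src ≠ e.dst ∧
          (∀ T : H.Vert, T.1.FWrites x v → T ≠ e.dst → T = e.src))}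
  CWW := {C | ∃ (x : Key) (T S : H.Vert), T ≠ S ∧
        T.1.WritesKey x ∧ S.1.WritesKey x ∧
        C = {LEdge.mk T S (DepLbl.WW x), LEdge.mk S T (DepLbl.WW x)}}
  CWR := {C | ∃ (x : Key) (S : H.Vert) (v : Val), S.1.FReads x v ∧
        C = {e | ∃ T : H.Vert, T.1.FWrites x v ∧ T ≠ S ∧ e = LEdge.mk T S (DepLbl.WR x)}}

/-- The induced SI graph of a directed labeled graph:
`(E'_SO ∪ E'_WR ∪ E'_WW) ; (E'_RW)?`. -/
def InducedSI (E' : DepEdgeSet V Key) : V → V → Prop :=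
  fun a b => ∃ c : V,
    (LEdge.mk a c DepLbl.SO ∈ E' ∨ (∃ x, LEdge.mk a c (DepLbl.WR x) ∈ E') ∨
      (∃ x, LEdge.mk a c (DepLbl.WW x) ∈ E')) ∧
    (c = b ∨ ∃ x, LEdge.mk c b (DepLbl.RW x) ∈ E')

/-! ### Commit-order hyper-polygraphs -/

/-- Labels for commit-order hyper-polygraphs. -/
inductive COLbl (Key : Type) where
  | SO
  | WR (x : Key)
  | CO

abbrev COEdge (V Key : Type) := LEdge V (COLbl Key)

/-- A commit-order hyper-polygraph. -/
structure COHyperPolygraph (V Key : Type) where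
  E : Set (COEdge V Key)
  CCO : Set (Set (COEdge V Key))
  CWR : Set (Set (COEdge V Key))

/-- The commit-order hyper-polygraph of a history `H`. -/
def History.cohpg (H : History Key Val) : COHyperPolygraph H.Vert Key where
  E := {e | (e.lbl = COLbl.SO ∧ H.SO e.src.1 e.dst.1) ∨
        (∃ (x : Key) (v : Val), e.lbl = COLbl.WR x ∧
          e.dst.1.FReads x v ∧ e.src.1.FWrites x v ∧ e.src ≠ e.dst ∧
          (∀ T : H.Vert, T.1.FWrites x v → T ≠ e.dst → T = e.src))}
  CCO := {C | ∃ T S : H.Vert, T ≠ S ∧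
        C = {LEdge.mk T S COLbl.CO, LEdge.mk S T COLbl.CO}}
  CWR := {C | ∃ (x : Key) (S : H.Vert) (v : Val), S.1.FReads x v ∧
        C = {e | ∃ T : H.Vert, T.1.FWrites x v ∧ T ≠ S ∧ e = LEdge.mk T S (COLbl.WR x)}}

/-- A directed labeled graph (given by its edge set `E'`) is SER-compatible with the
commit-order hyper-polygraph of the history `H`. -/
def SERCompatible (H : History Key Val) (E' : Set (COEdge H.Vert Key)) : Prop :=
  H.cohpg.E ⊆ E' ∧
  (∀ C ∈ H.cohpg.CCO ∪ H.cohpg.CWR, ∃! e, e ∈ E' ∧ e ∈ C) ∧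
  (∀ (x : Key) (T₁ T₂ T₃ : H.Vert), T₁ ≠ T₂ →
      LEdge.mk T₁ T₃ (COLbl.WR x) ∈ E' → T₂.1.WritesKey x →
      LEdge.mk T₂ T₃ COLbl.CO ∈ E' → LEdge.mk T₂ T₁ COLbl.CO ∈ E')

/-- The read-from conditions of a dependency graph on a family `WR`. -/
def ReadFromConds (H : History Key Val)
    (WR : Key → Txn Key Val → Txn Key Val → Prop) : Prop :=
  (∀ (x : Key) (T S : Txn Key Val), WR x T S → T ∈ H.txns ∧ S ∈ H.txns) ∧
  (∀ x : Key, ∀ S ∈ H.txns, (∃ v, S.FReads x v) → ∃! T, WR x T S) ∧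
  (∀ (x : Key) (T S : Txn Key Val), WR x T S →
      T ≠ S ∧ ∃ v, T.FWrites x v ∧ S.FReads x v)

/-! ### The pruning transition system -/

/-- `{(S,T',RW,x) : (T,S,WR,x) ∈ E, S ≠ T'}`: the RW edges derived from the WW edge
`(T,T',WW,x)` and the WR edges of `E`. -/
def DerivedRWofWW (E : DepEdgeSet V Key) (T T' : V) (x : Key) : DepEdgeSet V Key :=
  {e | ∃ S : V, LEdge.mk T S (DepLbl.WR x) ∈ E ∧ S ≠ T' ∧
      e = LEdge.mk S T' (DepLbl.RW x)}

/-- `{(S,T',RW,x) : (T,T',WW,x) ∈ E, S ≠ T'}`: the RW edges derived from the WR edge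
`(T,S,WR,x)` and the WW edges of `E`. -/
def DerivedRWofWR (E : DepEdgeSet V Key) (T S : V) (x : Key) : DepEdgeSet V Key :=
  {e | ∃ T' : V, LEdge.mk T T' (DepLbl.WW x) ∈ E ∧ S ≠ T' ∧
      e = LEdge.mk S T' (DepLbl.RW x)}

/-- States of the pruning transition system: a triple `⟨E, C^WW, C^WR⟩` or the
terminal state `S#` (`bad`). -/
inductive PState (V Key : Type) where
  | node (E : DepEdgeSet V Key) (CWW CWR : Set (DepEdgeSet V Key)) : PState V Key
  | bad : PState V Key

/-- The pruning transition relation `↪`. -/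
inductive PruneStep : PState V Key → PState V Key → Prop where
  | noChoice {E : DepEdgeSet V Key} {CWW CWR : Set (DepEdgeSet V Key)}
      (h : (∅ : DepEdgeSet V Key) ∈ CWW ∪ CWR) :
      PruneStep (.node E CWW CWR) .bad
  | cyc {E : DepEdgeSet V Key} {CWW CWR : Set (DepEdgeSet V Key)}
      (h : EdgeCyclic E) :
      PruneStep (.node E CWW CWR) .bad
  | wwElim {E : DepEdgeSet V Key} {CWW CWR : Set (DepEdgeSet V Key)}
      {cons : DepEdgeSet V Key} {T T' : V} {x : Key}
      (hc : cons ∈ CWW) (he : LEdge.mk T T' (DepLbl.WW x) ∈ cons)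
      (hcyc : EdgeCyclic (E ∪ {LEdge.mk T T' (DepLbl.WW x)} ∪ DerivedRWofWW E T T' x)) :
      PruneStep (.node E CWW CWR)
        (.node E ((CWW \ {cons}) ∪ {cons \ {LEdge.mk T T' (DepLbl.WW x)}}) CWR)
  | wrElim {E : DepEdgeSet V Key} {CWW CWR : Set (DepEdgeSet V Key)}
      {cons : DepEdgeSet V Key} {T S : V} {x : Key}
      (hc : cons ∈ CWR) (he : LEdge.mk T S (DepLbl.WR x) ∈ cons)
      (hcyc : EdgeCyclic (E ∪ {LEdge.mk T S (DepLbl.WR x)} ∪ DerivedRWofWR E T S x)) :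
      PruneStep (.node E CWW CWR)
        (.node E CWW ((CWR \ {cons}) ∪ {cons \ {LEdge.mk T S (DepLbl.WR x)}}))
  | wwIntro {E : DepEdgeSet V Key} {CWW CWR : Set (DepEdgeSet V Key)}
      {T T' : V} {x : Key}
      (hc : ({LEdge.mk T T' (DepLbl.WW x)} : DepEdgeSet V Key) ∈ CWW) :
      PruneStep (.node E CWW CWR)
        (.node (E ∪ {LEdge.mk T T' (DepLbl.WW x)} ∪ DerivedRWofWW E T T' x)
          (CWW \ {{LEdge.mk T T' (DepLbl.WW x)}}) CWR)
  | wrIntro {E : DepEdgeSet V Key} {CWW CWR : Set (DepEdgeSet V Key)}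
      {T S : V} {x : Key}
      (hc : ({LEdge.mk T S (DepLbl.WR x)} : DepEdgeSet V Key) ∈ CWR) :
      PruneStep (.node E CWW CWR)
        (.node (E ∪ {LEdge.mk T S (DepLbl.WR x)} ∪ DerivedRWofWR E T S x)
          CWW (CWR \ {{LEdge.mk T S (DepLbl.WR x)}}))

/-! ### Boolean encoding -/

/-- The edges occurring in some constraint of `G` (i.e. the edges carrying a
Boolean variable, besides the RW variables). -/
def ConsEdges (G : HyperPolygraph V Key) : DepEdgeSet V Key :=
  ⋃₀ (G.CWW ∪ G.CWR)

/-- The truth value, under the assignment `α`, of the literal associated with an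
edge: the constant true if the edge lies in `G.E`, and its variable's value
otherwise. -/
def EdgeVal (G : HyperPolygraph V Key) (α : DepEdge V Key → Prop)
    (e : DepEdge V Key) : Prop :=
  e ∈ G.E ∨ α e

/-- `α` satisfies the Boolean encoding `Φ_G` of the hyper-polygraph `G`. -/
def SatPhi (G : HyperPolygraph V Key) (α : DepEdge V Key → Prop) : Prop :=
  (∀ C ∈ G.CWW ∪ G.CWR, ∃ e ∈ C, α e) ∧
  (∀ C ∈ G.CWW ∪ G.CWR, ∀ e ∈ C, ∀ e' ∈ C, e ≠ e' → ¬(α e ∧ α e')) ∧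
  (∀ (x : Key) (T T' S : V), S ≠ T' →
      (LEdge.mk T T' (DepLbl.WW x) ∈ G.E ∨ LEdge.mk T T' (DepLbl.WW x) ∈ ConsEdges G) →
      (LEdge.mk T S (DepLbl.WR x) ∈ G.E ∨ LEdge.mk T S (DepLbl.WR x) ∈ ConsEdges G) →
      EdgeVal G α (LEdge.mk T T' (DepLbl.WW x)) →
      EdgeVal G α (LEdge.mk T S (DepLbl.WR x)) →
      α (LEdge.mk S T' (DepLbl.RW x)))

/-- The graph induced by the assignment `α`: `G.E` together with all constraint
edges and RW edges whose variables `α` sets to true. -/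
def InducedOf (G : HyperPolygraph V Key) (α : DepEdge V Key → Prop) :
    DepEdgeSet V Key :=
  G.E ∪ {e | e ∈ ConsEdges G ∧ α e} ∪
    {e | (∃ (x : Key) (S T' : V), S ≠ T' ∧ e = LEdge.mk S T' (DepLbl.RW x)) ∧ α e}

/-- `α` satisfies all 2-width-cycle clauses of `G`. -/
def SatPairClauses (G : HyperPolygraph V Key) (α : DepEdge V Key → Prop) : Prop :=
  (∀ e₁ e₂ : DepEdge V Key, e₁ ∈ ConsEdges G → e₂ ∈ ConsEdges G → e₁ ≠ e₂ →
      EReach G.E e₁.dst e₂.src → EReach G.E e₂.dst e₁.src → ¬(α e₁ ∧ α e₂)) ∧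
  (∀ (x : Key) (T T' S : V), T' ≠ T → T' ≠ S → EReach G.E T' S →
      LEdge.mk T T' (DepLbl.WW x) ∈ ConsEdges G →
      LEdge.mk T S (DepLbl.WR x) ∈ ConsEdges G →
      ¬(α (LEdge.mk T T' (DepLbl.WW x)) ∧ α (LEdge.mk T S (DepLbl.WR x))))

/-- The Boolean encoding `Φ_G` and `F = Φ_G ∧ ⋀_{ρ ∈ P} ρ` (with `P` the 2-width-cycle
clauses) are equisatisfiable relative to acyclicity. -/
theorem pair_clauses_equisatisfiable (V Key : Type) [Finite V]
    (G : HyperPolygraph V Key) (hfin : ∀ C ∈ G.CWW ∪ G.CWR, C.Finite) :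
    (∃ α : DepEdge V Key → Prop, SatPhi G α ∧ ¬ EdgeCyclic (InducedOf G α)) ↔
    (∃ α : DepEdge V Key → Prop,
        (SatPhi G α ∧ SatPairClauses G α) ∧ ¬ EdgeCyclic (InducedOf G α)) := by
  constructor
  · rintro ⟨α, hφ, hac⟩
    refine ⟨α, ⟨hφ, ?_, ?_⟩, hac⟩
    · -- canonical case
      rintro e₁ e₂ h₁ h₂ hne hr₁ hr₂ ⟨ha₁, ha₂⟩
      apply hac
      have hsub : G.E ⊆ InducedOf G α := fun e he =>
        Or.inl (Or.inl he)
      have hm : ∀ a b, EReach G.E a b → EReach (InducedOf G α) a b := by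
        intro a b h
        exact Relation.ReflTransGen.mono (r := EStep G.E) (p := EStep (InducedOf G α))
          (fun a b (hab : EStep G.E a b) => show EStep (InducedOf G α) a b from
            let ⟨l, hl⟩ := hab; ⟨l, hsub hl⟩) a b h
      have he₁ : e₁ ∈ InducedOf G α := Or.inl (Or.inr ⟨h₁, ha₁⟩)
      have he₂ : e₂ ∈ InducedOf G α := Or.inl (Or.inr ⟨h₂, ha₂⟩)
      have step₁ : EStep (InducedOf G α) e₁.src e₁.dst := ⟨e₁.lbl, he₁⟩
      have step₂ : EStep (InducedOf G α) e₂.src e₂.dst := ⟨e₂.lbl, he₂⟩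
      exact ⟨e₁.src, Relation.TransGen.head' step₁
        (((hm _ _ hr₁).trans (Relation.ReflTransGen.single step₂)).trans
          (hm _ _ hr₂))⟩
    · -- derived-RW case
      rintro x T T' S hTT' hTS hreach hww hwr ⟨ha, hb⟩
      apply hac
      have hsub : G.E ⊆ InducedOf G α := fun e he => Or.inl (Or.inl he)
      have hm : ∀ a b, EReach G.E a b → EReach (InducedOf G α) a b := by
        intro a b h
        exact Relation.ReflTransGen.mono (r := EStep G.E) (p := EStep (InducedOf G α))
          (fun a b (hab : EStep G.E a b) => show EStep (InducedOf G α) a b from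
            let ⟨l, hl⟩ := hab; ⟨l, hsub hl⟩) a b h
      have hrw : α (LEdge.mk S T' (DepLbl.RW x)) :=
        hφ.2.2 x T T' S (Ne.symm hTS) (Or.inr hww) (Or.inr hwr)
          (Or.inr ha) (Or.inr hb)
      have hrwmem : LEdge.mk S T' (DepLbl.RW x) ∈ InducedOf G α :=
        Or.inr ⟨⟨x, S, T', Ne.symm hTS, rfl⟩, hrw⟩
      exact ⟨S, Relation.TransGen.head' ⟨_, hrwmem⟩ (hm _ _ hreach)⟩
  · rintro ⟨α, ⟨hφ, _⟩, hac⟩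
    exact ⟨α, hφ, hac⟩

end DBIso
end

section
/- Let H be a history with hyper-polygraph G = (V, E, (C^WW, C^WR)), let S be a transaction and x a key with S ⊢ R(x,v), let C = {(T,S,WR,x) : T ⊢ W(x,v), T ≠ S} be the corresponding constraint in C^WR, and let e_i = (T_i,S,WR,x) ∈ C. If for every edge e_j = (T_j,S,WR,x) ∈ C with T_j ≠ T_i, the edge set E ∪ {e_j} ∪ {(S,T',RW,x) : (T_j,T',WW,x) ∈ E, S ≠ T'} is cyclic, then every acyclic directed labeled graph compatible with G contains e_i. -/
namespace DBIso

variable {Key Val : Type}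

variable {V L : Type}

/-- WR pruning by elimination: if every other read-from candidate edge of the
constraint `C` creates a cycle with the known graph (together with its derived RW
edges), then every acyclic compatible graph contains the remaining edge `e_i`. -/
theorem wr_constraint_forced_edge (Key Val : Type) (H : History Key Val)
    (S : H.Vert) (x : Key) (v : Val) (hread : S.1.FReads x v)
    (C : DepEdgeSet H.Vert Key)
    (hC : C = {e | ∃ T : H.Vert, T.1.FWrites x v ∧ T ≠ S ∧
        e = LEdge.mk T S (DepLbl.WR x)})
    (Ti : H.Vert) (hei : LEdge.mk Ti S (DepLbl.WR x) ∈ C)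
    (hcyc : ∀ Tj : H.Vert, LEdge.mk Tj S (DepLbl.WR x) ∈ C → Tj ≠ Ti →
      EdgeCyclic
        (H.hpg.E ∪ {LEdge.mk Tj S (DepLbl.WR x)} ∪ DerivedRWofWR H.hpg.E Tj S x)) :
    ∀ E' : DepEdgeSet H.Vert Key, Compatible H.hpg E' → ¬ EdgeCyclic E' →
      LEdge.mk Ti S (DepLbl.WR x) ∈ E' := by
  subst hC
  intro E' hcomp hacyc
  obtain ⟨hE, hRW, huniq⟩ := hcomp
  have hCmem : {e | ∃ T : H.Vert, T.1.FWrites x v ∧ T ≠ S ∧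
        e = LEdge.mk T S (DepLbl.WR x)} ∈ H.hpg.CWR := ⟨x, S, v, hread, rfl⟩
  obtain ⟨e, ⟨heE', heC⟩, -⟩ := huniq _ (Or.inr hCmem)
  obtain ⟨T, hTw, hTS, rfl⟩ := heC
  by_cases hT : T = Ti
  · subst hT; exact heE'
  · exfalso
    obtain ⟨a, ha⟩ := hcyc T ⟨T, hTw, hTS, rfl⟩ hT
    apply hacyc
    refine ⟨a, Relation.TransGen.mono ?_ a a ha⟩
    rintro b c ⟨l, hl⟩
    refine ⟨l, ?_⟩
    rcases hl with (hl | hl) | hl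
    · exact hE hl
    · rw [Set.mem_singleton_iff] at hl
      rw [hl]; exact heE'
    · obtain ⟨T', hww, hST', heq⟩ := hl
      rw [heq]
      exact hRW x S T T' hST' heE' (hE hww)

end DBIso
end

section
/- For every history H with hyper-polygraph G: H satisfies SER if and only if H ⊨ Int and there exists an assignment α satisfying the Boolean encoding Φ_G such that the graph induced by α is acyclic. -/
namespace DBIso

variable {Key Val : Type}

variable {V L : Type}

/-- Auxiliary assignment used in the forward direction: set an edge variable to
true iff the edge goes along `co` (and, for a WR edge on `x`, the source is the
`co`-greatest `co`-predecessor of the destination writing `x`). -/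
def serAlpha (H : History Key Val) (co : Txn Key Val → Txn Key Val → Prop) :
    DepEdge H.Vert Key → Prop
  | ⟨_, _, .SO⟩ => False
  | ⟨T, S, .WW _⟩ => co T.1 S.1
  | ⟨T, S, .RW _⟩ => co T.1 S.1
  | ⟨T, S, .WR x⟩ => co T.1 S.1 ∧
      ∀ U, co U S.1 → U.WritesKey x → U = T.1 ∨ co U T.1

lemma mem_hpg_E {H : History Key Val} {e : DepEdge H.Vert Key} :
    e ∈ H.hpg.E ↔ (e.lbl = DepLbl.SO ∧ H.SO e.src.1 e.dst.1) ∨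
      (∃ (x : Key) (v : Val), e.lbl = DepLbl.WR x ∧
        e.dst.1.FReads x v ∧ e.src.1.FWrites x v ∧ e.src ≠ e.dst ∧
        (∀ T : H.Vert, T.1.FWrites x v → T ≠ e.dst → T = e.src)) := Iff.rfl

lemma mem_hpg_CWW {H : History Key Val} {C : DepEdgeSet H.Vert Key} :
    C ∈ H.hpg.CWW ↔ ∃ (x : Key) (T S : H.Vert), T ≠ S ∧
      T.1.WritesKey x ∧ S.1.WritesKey x ∧
      C = {LEdge.mk T S (DepLbl.WW x), LEdge.mk S T (DepLbl.WW x)} := Iff.rfl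

lemma mem_hpg_CWR {H : History Key Val} {C : DepEdgeSet H.Vert Key} :
    C ∈ H.hpg.CWR ↔ ∃ (x : Key) (S : H.Vert) (v : Val), S.1.FReads x v ∧
      C = {e | ∃ T : H.Vert, T.1.FWrites x v ∧ T ≠ S ∧
        e = LEdge.mk T S (DepLbl.WR x)} := Iff.rfl

lemma mem_consEdges {G : HyperPolygraph V Key} {e : DepEdge V Key} :
    e ∈ ConsEdges G ↔ ∃ C ∈ G.CWW ∪ G.CWR, e ∈ C := Set.mem_sUnion

/-- Theorem (SER via the Boolean encoding): `H` satisfies SER iff `H ⊨ Int` and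
there is an assignment satisfying `Φ_G` (for `G` the hyper-polygraph of `H`) whose
induced graph is acyclic. -/
theorem ser_iff_encoding (Key Val : Type) (H : History Key Val) :
    H.SatSER ↔
      H.SatInt ∧
      ∃ α : DepEdge H.Vert Key → Prop,
        SatPhi H.hpg α ∧ ¬ EdgeCyclic (InducedOf H.hpg α) := by
  constructor
  · -- Forward direction
    rintro ⟨hInt, co, ⟨hmem, hirr, htrans, htot⟩, hsoco, hread⟩
    refine ⟨hInt, serAlpha H co, ?_, ?_⟩
    · -- if `T` is the unique writer (other than `S`) of a value read by `S`,
      -- then `T` is the co-greatest predecessor of `S` writing `x`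
      have hwrE : ∀ (x : Key) (v : Val) (T S : H.Vert), S.1.FReads x v →
          T.1.FWrites x v → T ≠ S →
          (∀ U : H.Vert, U.1.FWrites x v → U ≠ S → U = T) →
          co T.1 S.1 ∧
          (∀ U, co U S.1 → U.WritesKey x → U = T.1 ∨ co U T.1) := by
        intro x v T S hr hw hne huniq
        obtain ⟨T', hcoT', hwk, hmax, hfw⟩ := hread S.1 S.2 x v hr
        have hT'mem : T' ∈ H.txns := (hmem _ _ hcoT').1
        have hT'S : (⟨T', hT'mem⟩ : H.Vert) ≠ S := by
          intro h
          exact hirr S.1 (by rw [← congrArg Subtype.val h] at hcoT' ⊢; exact hcoT')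
        have hTT' : T.1 = T' := (congrArg Subtype.val (huniq ⟨T', hT'mem⟩ hfw hT'S)).symm
        rw [hTT']
        exact ⟨hcoT', hmax⟩
      -- α-true edges go along co
      have hα_co : ∀ (a b : H.Vert) (l : DepLbl Key),
          serAlpha H co (LEdge.mk a b l) → co a.1 b.1 := by
        intro a b l h
        cases l with
        | SO => exact absurd h (by simp [serAlpha])
        | WW x => exact h
        | RW x => exact h
        | WR x => exact h.1
      refine ⟨?_, ?_, ?_⟩
      · -- existence clause
        rintro C (hC | hC)
        · obtain ⟨x, T, S, hTS, hTw, hSw, rfl⟩ := mem_hpg_CWW.1 hC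
          have hne : T.1 ≠ S.1 := fun h => hTS (Subtype.ext h)
          rcases htot T.1 T.2 S.1 S.2 hne with h | h
          · exact ⟨LEdge.mk T S (DepLbl.WW x), Set.mem_insert _ _, h⟩
          · exact ⟨LEdge.mk S T (DepLbl.WW x),
              Set.mem_insert_iff.2 (Or.inr rfl), h⟩
        · obtain ⟨x, S, v, hr, rfl⟩ := mem_hpg_CWR.1 hC
          obtain ⟨T', hcoT', hwk, hmax, hfw⟩ := hread S.1 S.2 x v hr
          have hT'mem : T' ∈ H.txns := (hmem _ _ hcoT').1
          have hT'S : (⟨T', hT'mem⟩ : H.Vert) ≠ S := by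
            intro h
            exact hirr S.1 (by rw [← congrArg Subtype.val h] at hcoT' ⊢; exact hcoT')
          exact ⟨LEdge.mk ⟨T', hT'mem⟩ S (DepLbl.WR x),
            ⟨⟨T', hT'mem⟩, hfw, hT'S, rfl⟩, hcoT', hmax⟩
      · -- at-most-one clause
        rintro C (hC | hC)
        · obtain ⟨x, T, S, hTS, hTw, hSw, rfl⟩ := mem_hpg_CWW.1 hC
          intro e he e' he' hne ⟨hae, hae'⟩
          simp only [Set.mem_insert_iff, Set.mem_singleton_iff] at he he'
          rcases he with rfl | rfl <;> rcases he' with rfl | rfl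
          · exact hne rfl
          · exact hirr T.1 (htrans _ _ _ hae hae')
          · exact hirr S.1 (htrans _ _ _ hae hae')
          · exact hne rfl
        · obtain ⟨x, S, v, hr, rfl⟩ := mem_hpg_CWR.1 hC
          rintro e ⟨T1, hw1, hne1, rfl⟩ e' ⟨T2, hw2, hne2, rfl⟩ hne ⟨hae, hae'⟩
          have h12 : T1 ≠ T2 := fun h => hne (by rw [h])
          rcases hae'.2 T1.1 hae.1 ⟨v, hw1⟩ with h | h
          · exact h12 (Subtype.ext h)
          · rcases hae.2 T2.1 hae'.1 ⟨v, hw2⟩ with h' | h'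
            · exact h12 (Subtype.ext h'.symm)
            · exact hirr T1.1 (htrans _ _ _ h h')
      · -- RW clause
        intro x T T' S hST' hWWmem hWRmem hWWval hWRval
        have hST'v : S.1 ≠ T'.1 := fun h => hST' (Subtype.ext h)
        have hWWα : co T.1 T'.1 := by
          rcases hWWval with hE | hα
          · rcases mem_hpg_E.1 hE with ⟨hl, _⟩ | ⟨x', v, hl, _⟩ <;> simp at hl
          · exact hα
        have hT'w : T'.1.WritesKey x := by
          rcases hWWmem with hE | hCE
          · rcases mem_hpg_E.1 hE with ⟨hl, _⟩ | ⟨x', v, hl, _⟩ <;> simp at hl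
          · obtain ⟨C, hCmem, heC⟩ := mem_consEdges.1 hCE
            rcases hCmem with hC | hC
            · obtain ⟨y, A, B, hAB, hAw, hBw, rfl⟩ := mem_hpg_CWW.1 hC
              simp only [Set.mem_insert_iff, Set.mem_singleton_iff,
                LEdge.mk.injEq] at heC
              rcases heC with ⟨rfl, rfl, h⟩ | ⟨rfl, rfl, h⟩
              · cases h; exact hBw
              · cases h; exact hAw
            · obtain ⟨y, S2, v, hr2, rfl⟩ := mem_hpg_CWR.1 hC
              obtain ⟨U, _, _, hEq⟩ := heC
              simp [LEdge.mk.injEq] at hEq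
        have key : co T.1 S.1 ∧
            ∀ U, co U S.1 → U.WritesKey x → U = T.1 ∨ co U T.1 := by
          rcases hWRval with hE | hα
          · rcases mem_hpg_E.1 hE with ⟨hl, _⟩ | ⟨x', v, hl, hr, hw, hne, huniq⟩
            · simp at hl
            · have hx : x = x' := by
                simpa using hl
              subst hx
              exact hwrE x v T S hr hw hne huniq
          · exact hα
        show co S.1 T'.1
        rcases htot S.1 S.2 T'.1 T'.2 hST'v with h | h
        · exact h
        · rcases key.2 T'.1 h hT'w with h2 | h2
          · exact absurd (h2 ▸ hWWα) (hirr T.1)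
          · exact absurd (htrans _ _ _ hWWα h2) (hirr T.1)
    · -- acyclicity of the induced graph
      have hwrE : ∀ (x : Key) (v : Val) (T S : H.Vert), S.1.FReads x v →
          T.1.FWrites x v → T ≠ S →
          (∀ U : H.Vert, U.1.FWrites x v → U ≠ S → U = T) → co T.1 S.1 := by
        intro x v T S hr hw hne huniq
        obtain ⟨T', hcoT', hwk, hmax, hfw⟩ := hread S.1 S.2 x v hr
        have hT'mem : T' ∈ H.txns := (hmem _ _ hcoT').1
        have hT'S : (⟨T', hT'mem⟩ : H.Vert) ≠ S := by
          intro h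
          exact hirr S.1 (by rw [← congrArg Subtype.val h] at hcoT' ⊢; exact hcoT')
        have hTT' : T.1 = T' := (congrArg Subtype.val (huniq ⟨T', hT'mem⟩ hfw hT'S)).symm
        rw [hTT']; exact hcoT'
      have hα_co : ∀ (a b : H.Vert) (l : DepLbl Key),
          serAlpha H co (LEdge.mk a b l) → co a.1 b.1 := by
        intro a b l h
        cases l with
        | SO => exact absurd h (by simp [serAlpha])
        | WW x => exact h
        | RW x => exact h
        | WR x => exact h.1
      have hstep : ∀ a b : H.Vert, EStep (InducedOf H.hpg (serAlpha H co)) a b →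
          co a.1 b.1 := by
        rintro a b ⟨l, hl⟩
        rcases hl with (he | ⟨_, ha⟩) | ⟨_, ha⟩
        · rcases mem_hpg_E.1 he with ⟨_, hso⟩ | ⟨x, v, _, hr, hw, hne, huniq⟩
          · exact hsoco _ _ hso
          · exact hwrE x v a b hr hw hne huniq
        · exact hα_co a b l ha
        · exact hα_co a b l ha
      rintro ⟨a, hpath⟩
      have hR : Transitive (fun a b : H.Vert => co a.1 b.1) :=
        fun a b c hab hbc => htrans _ _ _ hab hbc
      have h2 : Relation.TransGen (fun a b : H.Vert => co a.1 b.1) a a :=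
        Relation.TransGen.mono (fun a b h => hstep a b h) _ _ hpath
      rw [@Relation.transGen_eq_self H.Vert (fun a b : H.Vert => co a.1 b.1) ⟨hR⟩] at h2
      exact hirr a.1 h2
  · -- Backward direction
    rintro ⟨hInt, α, ⟨hφ1, hφ2, hφ3⟩, hacyc⟩
    refine ⟨hInt, ?_⟩
    have hpo : IsPartialOrder H.Vert (EReach (InducedOf H.hpg α)) :=
      { refl := fun a => Relation.ReflTransGen.refl
        trans := fun a b c hab hbc => Relation.ReflTransGen.trans hab hbc
        antisymm := fun a b hab hba => by
          by_contra hne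
          rcases Relation.reflTransGen_iff_eq_or_transGen.1 hab with h | h
          · exact hne h.symm
          · exact hacyc ⟨a, h.trans_left hba⟩ }
    obtain ⟨s, hs, hrs⟩ := @extend_partialOrder H.Vert (EReach (InducedOf H.hpg α)) hpo
    haveI := hs
    have hstep_s : ∀ a b : H.Vert, EStep (InducedOf H.hpg α) a b → s a b :=
      fun a b h => hrs _ _ (Relation.ReflTransGen.single h)
    refine ⟨fun T S => ∃ (hT : T ∈ H.txns) (hS : S ∈ H.txns),
        T ≠ S ∧ s ⟨T, hT⟩ ⟨S, hS⟩, ⟨?_, ?_, ?_, ?_⟩, ?_, ?_⟩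
    · rintro a b ⟨ha, hb, _, _⟩
      exact ⟨ha, hb⟩
    · rintro a ⟨_, _, hne, _⟩
      exact hne rfl
    · rintro a b c ⟨ha, hb, hab, hs1⟩ ⟨hb', hc, hbc, hs2⟩
      refine ⟨ha, hc, ?_, IsTrans.trans _ _ _ hs1 hs2⟩
      rintro rfl
      exact hab (congrArg Subtype.val
        (Std.Antisymm.antisymm (r := s) _ _ hs1 hs2))
    · intro a ha b hb hne
      rcases Std.Total.total (r := s) (⟨a, ha⟩ : H.Vert) ⟨b, hb⟩ with h | h
      · exact Or.inl ⟨ha, hb, hne, h⟩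
      · exact Or.inr ⟨hb, ha, hne.symm, h⟩
    · -- SO ⊆ co
      intro T S hso
      have hT : T ∈ H.txns := (H.so_mem _ _ hso).1
      have hS : S ∈ H.txns := (H.so_mem _ _ hso).2
      have hne : T ≠ S := by rintro rfl; exact H.so_irrefl T hso
      have hin : LEdge.mk (⟨T, hT⟩ : H.Vert) ⟨S, hS⟩ DepLbl.SO ∈
          InducedOf H.hpg α := Or.inl (Or.inl (Or.inl ⟨rfl, hso⟩))
      exact ⟨hT, hS, hne, hstep_s _ _ ⟨_, hin⟩⟩
    · -- reads
      intro S hS x v hr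
      have hC : {e | ∃ T : H.Vert, T.1.FWrites x v ∧ T ≠ ⟨S, hS⟩ ∧
          e = LEdge.mk T ⟨S, hS⟩ (DepLbl.WR x)} ∈ H.hpg.CWR :=
        ⟨x, ⟨S, hS⟩, v, hr, rfl⟩
      obtain ⟨e, heC, hαe⟩ := hφ1 _ (Or.inr hC)
      obtain ⟨Tw, hTwW, hTwS, rfl⟩ := heC
      have hwrCons : LEdge.mk Tw ⟨S, hS⟩ (DepLbl.WR x) ∈ ConsEdges H.hpg :=
        mem_consEdges.2 ⟨_, Or.inr hC, ⟨Tw, hTwW, hTwS, rfl⟩⟩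
      have hwrE' : LEdge.mk Tw ⟨S, hS⟩ (DepLbl.WR x) ∈ InducedOf H.hpg α :=
        Or.inl (Or.inr ⟨hwrCons, hαe⟩)
      have hsTwS : s Tw ⟨S, hS⟩ := hstep_s _ _ ⟨_, hwrE'⟩
      have hTwSne : Tw.1 ≠ S := fun h => hTwS (Subtype.ext h)
      refine ⟨Tw.1, ⟨Tw.2, hS, hTwSne, hsTwS⟩, ⟨v, hTwW⟩, ?_, hTwW⟩
      rintro T ⟨hTmem, hS2, hTS, hsT⟩ hTwK
      by_cases heq : T = Tw.1
      · exact Or.inl heq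
      · have hTvTw : (⟨T, hTmem⟩ : H.Vert) ≠ Tw :=
          fun h => heq (congrArg Subtype.val h)
        have hCww : ({LEdge.mk (⟨T, hTmem⟩ : H.Vert) Tw (DepLbl.WW x),
            LEdge.mk Tw ⟨T, hTmem⟩ (DepLbl.WW x)} : DepEdgeSet H.Vert Key) ∈
            H.hpg.CWW := ⟨x, ⟨T, hTmem⟩, Tw, hTvTw, hTwK, ⟨v, hTwW⟩, rfl⟩
        obtain ⟨e2, he2, hαe2⟩ := hφ1 _ (Or.inl hCww)
        simp only [Set.mem_insert_iff, Set.mem_singleton_iff] at he2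
        rcases he2 with rfl | rfl
        · have hin : LEdge.mk (⟨T, hTmem⟩ : H.Vert) Tw (DepLbl.WW x) ∈
              InducedOf H.hpg α :=
            Or.inl (Or.inr ⟨mem_consEdges.2 ⟨_, Or.inl hCww, Set.mem_insert _ _⟩,
              hαe2⟩)
          exact Or.inr ⟨hTmem, Tw.2, heq, hstep_s _ _ ⟨_, hin⟩⟩
        · have hwwCons : LEdge.mk Tw (⟨T, hTmem⟩ : H.Vert) (DepLbl.WW x) ∈
              ConsEdges H.hpg :=
            mem_consEdges.2 ⟨_, Or.inl hCww,
              Set.mem_insert_iff.2 (Or.inr rfl)⟩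
          have hSvTv : (⟨S, hS⟩ : H.Vert) ≠ ⟨T, hTmem⟩ :=
            fun h => hTS (congrArg Subtype.val h).symm
          have hαrw := hφ3 x Tw ⟨T, hTmem⟩ ⟨S, hS⟩ hSvTv (Or.inr hwwCons)
            (Or.inr hwrCons) (Or.inr hαe2) (Or.inr hαe)
          have hin : LEdge.mk (⟨S, hS⟩ : H.Vert) ⟨T, hTmem⟩ (DepLbl.RW x) ∈
              InducedOf H.hpg α :=
            Or.inr ⟨⟨x, ⟨S, hS⟩, ⟨T, hTmem⟩, hSvTv, rfl⟩, hαrw⟩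
          have hsST : s ⟨S, hS⟩ ⟨T, hTmem⟩ := hstep_s _ _ ⟨_, hin⟩
          exact absurd (congrArg Subtype.val
            (Std.Antisymm.antisymm (r := s) _ _ hsST hsT)).symm hTS

end DBIso
end
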